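/- Let f₁ : ℝ^m → ℝ be convex, f₂ : ℝ^d → ℝ convex and differentiable, B : ℝ^d → ℝ^m linear with adjoint Bᵀ, and let λ, γ > 0. Define h : ℝ^m → ℝ by h(x) = (λ/γ) f₁((γ/λ) x). Suppose x* ∈ ℝ^d and v* ∈ ℝ^m satisfy the fixed-point equations: with w = (λ/γ) B(x* − γ ∇f₂(x*)) + (I − λ B Bᵀ) v*, the point w − v* minimizes x ↦ h(x) + (1/2)‖x − w‖² over ℝ^m (i.e., v* = (I − Prox_h)(w)), and x* = x* − γ ∇f₂(x*) − γ Bᵀ v*. Then x* is a minimizer of x ↦ f₁(B x) + f₂(x) over ℝ^d. -/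

import Mathlib

open scoped RealInnerProductSpace

open Filter Set Topology

/-- If `a ≤ b + t * K` for all `t ∈ (0,1]`, then `a ≤ b`. -/
lemma aux_le_of_forall_t (a b K : ℝ) (h : ∀ t : ℝ, 0 < t → t ≤ 1 → a ≤ b + t * K) :
    a ≤ b := by
  have ht : Tendsto (fun t : ℝ => b + t * K) (𝓝[>] (0:ℝ)) (𝓝 b) := by
    have hcont : Tendsto (fun t : ℝ => b + t * K) (𝓝 (0:ℝ)) (𝓝 (b + 0 * K)) :=
      (Continuous.tendsto (by continuity) 0)
    simpa using hcont.mono_left nhdsWithin_le_nhds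
  refine ge_of_tendsto ht ?_
  filter_upwards [Ioc_mem_nhdsGT_of_mem (by simp : (0:ℝ) ∈ Ico (0:ℝ) 1)] with t htmem
  exact h t htmem.1 htmem.2

/-- First-order condition for a differentiable convex function. -/
lemma aux_grad_ineq {n : ℕ} (f : EuclideanSpace ℝ (Fin n) → ℝ)
    (hc : ConvexOn ℝ Set.univ f) (hd : Differentiable ℝ f)
    (y x : EuclideanSpace ℝ (Fin n)) :
    ⟪gradient f y, x - y⟫ ≤ f x - f y := by
  set φ : ℝ → ℝ := fun t => f (y + t • (x - y)) with hφdef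
  have hL : HasDerivAt (fun t : ℝ => y + t • (x - y)) (x - y) 0 := by
    have h1 : HasDerivAt (fun t : ℝ => t • (x - y)) ((1:ℝ) • (x - y)) 0 :=
      (hasDerivAt_id (0:ℝ)).smul_const (x - y)
    simpa using h1.const_add y
  have hF : HasFDerivAt f ((InnerProductSpace.toDual ℝ _) (gradient f y)) y :=
    hasGradientAt_iff_hasFDerivAt.mp (hd y).hasGradientAt
  have hF' : HasFDerivAt f ((InnerProductSpace.toDual ℝ _) (gradient f y))
      ((fun t : ℝ => y + t • (x - y)) 0) := by simpa using hF
  have hφ : HasDerivAt φ (⟪gradient f y, x - y⟫) 0 := by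
    have := hF'.comp_hasDerivAt 0 hL
    exact this
  have hslope : Tendsto (slope φ 0) (𝓝[>] (0:ℝ)) (𝓝 (⟪gradient f y, x - y⟫)) :=
    (hasDerivAt_iff_tendsto_slope.mp hφ).mono_left
      (nhdsWithin_mono 0 (fun t ht => ne_of_gt ht))
  refine le_of_tendsto hslope ?_
  filter_upwards [Ioc_mem_nhdsGT_of_mem (by simp : (0:ℝ) ∈ Ico (0:ℝ) 1)] with t htmem
  obtain ⟨htpos, htle⟩ := htmem
  have hcomb : φ t ≤ (1 - t) * f y + t * f x := by
    have heq : y + t • (x - y) = (1 - t) • y + t • x := by module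
    have := hc.2 (mem_univ y) (mem_univ x) (by linarith : (0:ℝ) ≤ 1 - t)
      (le_of_lt htpos) (by ring)
    simpa [hφdef, heq, smul_eq_mul] using this
  have hφ0 : φ 0 = f y := by simp [hφdef]
  have hs : slope φ 0 t = (φ t - φ 0) / t := by simp [slope_def_field]
  rw [hs, div_le_iff₀ htpos]
  nlinarith [hcomb, hφ0]

theorem stmt10 (m d : ℕ)
    (f₁ : EuclideanSpace ℝ (Fin m) → ℝ) (hf₁ : ConvexOn ℝ Set.univ f₁)
    (f₂ : EuclideanSpace ℝ (Fin d) → ℝ) (hf₂conv : ConvexOn ℝ Set.univ f₂)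
    (hf₂ : Differentiable ℝ f₂)
    (B : EuclideanSpace ℝ (Fin d) →L[ℝ] EuclideanSpace ℝ (Fin m))
    (lam γ : ℝ) (hlam : 0 < lam) (hγ : 0 < γ)
    (h : EuclideanSpace ℝ (Fin m) → ℝ)
    (hh : ∀ x, h x = (lam / γ) * f₁ ((γ / lam) • x))
    (xs : EuclideanSpace ℝ (Fin d)) (vs : EuclideanSpace ℝ (Fin m))
    (w : EuclideanSpace ℝ (Fin m))
    (hw : w = (lam / γ) • B (xs - γ • gradient f₂ xs) +
      (vs - lam • B (ContinuousLinearMap.adjoint B vs)))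
    (hprox : ∀ x, h (w - vs) + (1 / 2) * ‖(w - vs) - w‖ ^ 2 ≤ h x + (1 / 2) * ‖x - w‖ ^ 2)
    (hfix : xs = xs - γ • gradient f₂ xs - γ • ContinuousLinearMap.adjoint B vs) :
    ∀ x : EuclideanSpace ℝ (Fin d), f₁ (B xs) + f₂ xs ≤ f₁ (B x) + f₂ x := by
  set g := gradient f₂ xs with hg
  set Bt := ContinuousLinearMap.adjoint B with hBt
  -- Step 1 : gradient f₂ xs = - Bᵀ vs
  have hgrad : g = -(Bt vs) := by
    have h0 : γ • g + γ • Bt vs = 0 := by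
      have := hfix
      have : xs - (xs - γ • g - γ • Bt vs) = 0 := by rw [← this]; abel
      calc γ • g + γ • Bt vs = xs - (xs - γ • g - γ • Bt vs) := by abel
        _ = 0 := this
    have h1 : γ • (g + Bt vs) = 0 := by rw [smul_add]; exact h0
    have h2 : g + Bt vs = 0 := by
      rcases smul_eq_zero.mp h1 with hc | hc
      · exact absurd hc (ne_of_gt hγ)
      · exact hc
    linear_combination (norm := abel) h2
  -- Step 2 : w - vs = (lam/γ) • B xs
  have hu : w - vs = (lam / γ) • B xs := by
    have hlg : (lam / γ) * γ = lam := div_mul_cancel₀ lam (ne_of_gt hγ)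
    rw [hw, hgrad]
    have : xs - γ • -(Bt vs) = xs + γ • Bt vs := by rw [smul_neg, sub_neg_eq_add]
    rw [this, map_add, map_smul, smul_add, smul_smul, hlg]
    abel
  set u := w - vs with hudef
  -- Step 3 : subgradient inequality for h at u
  have hsub : ∀ x : EuclideanSpace ℝ (Fin m), ⟪vs, x - u⟫ ≤ h x - h u := by
    intro x
    refine aux_le_of_forall_t _ _ ((1/2) * ‖x - u‖ ^ 2) ?_
    intro t ht0 ht1
    have hxt : u + t • (x - u) = (1 - t) • u + t • x := by module
    have hconvh : ConvexOn ℝ Set.univ h := by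
      refine ⟨convex_univ, ?_⟩
      intro p _ q _ a b ha hb hab
      have hkey := hf₁.2 (Set.mem_univ ((γ/lam) • p)) (Set.mem_univ ((γ/lam) • q)) ha hb hab
      rw [hh, hh, hh]
      have hsc : (γ/lam) • (a • p + b • q) = a • ((γ/lam) • p) + b • ((γ/lam) • q) := by
        module
      rw [hsc]
      have hpos : (0:ℝ) < lam/γ := div_pos hlam hγ
      calc lam/γ * f₁ (a • ((γ/lam) • p) + b • ((γ/lam) • q))
          ≤ lam/γ * (a * f₁ ((γ/lam) • p) + b * f₁ ((γ/lam) • q)) :=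
            mul_le_mul_of_nonneg_left (by simpa [smul_eq_mul] using hkey) hpos.le
        _ = a * (lam/γ * f₁ ((γ/lam) • p)) + b * (lam/γ * f₁ ((γ/lam) • q)) := by ring
    have hc : h (u + t • (x - u)) ≤ (1 - t) * h u + t * h x := by
      rw [hxt]
      have := hconvh.2 (mem_univ u) (mem_univ x) (by linarith : (0:ℝ) ≤ 1 - t)
        (le_of_lt ht0) (by ring)
      simpa [smul_eq_mul] using this
    have hp := hprox (u + t • (x - u))
    have huw : u - w = -vs := by rw [hudef]; abel
    have hnorm1 : ‖u - w‖ ^ 2 = ‖vs‖ ^ 2 := by rw [huw, norm_neg]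
    have hxtw : u + t • (x - u) - w = t • (x - u) - vs := by
      rw [hudef]; abel
    have hnorm2 : ‖u + t • (x - u) - w‖ ^ 2
        = t ^ 2 * ‖x - u‖ ^ 2 - 2 * (t * ⟪x - u, vs⟫) + ‖vs‖ ^ 2 := by
      rw [hxtw, norm_sub_sq_real, real_inner_smul_left, norm_smul, Real.norm_eq_abs,
        abs_of_pos ht0, mul_pow]
    rw [hnorm1, hnorm2] at hp
    have key : t * ⟪x - u, vs⟫ ≤ t * ((h x - h u) + t * ((1/2) * ‖x - u‖ ^ 2)) := by
      ring_nf
      ring_nf at hp hc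
      linarith [hp, hc]
    have key2 := (mul_le_mul_iff_right₀ ht0).mp key
    rw [real_inner_comm] at key2
    linarith [key2]
  -- Step 4 : vs is a subgradient of f₁ at B xs
  have hsubf₁ : ∀ y : EuclideanSpace ℝ (Fin m), ⟪vs, y - B xs⟫ ≤ f₁ y - f₁ (B xs) := by
    intro y
    have hne : lam / γ ≠ 0 := ne_of_gt (div_pos hlam hγ)
    have hinv : (γ / lam) * (lam / γ) = 1 := by field_simp
    have h1 := hsub ((lam / γ) • y)
    have hx_u : (lam / γ) • y - u = (lam / γ) • (y - B xs) := by
      rw [hu, smul_sub]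
    have hhy : h ((lam / γ) • y) = (lam / γ) * f₁ y := by
      rw [hh, smul_smul, hinv, one_smul]
    have hhu : h u = (lam / γ) * f₁ (B xs) := by
      rw [hu, hh, smul_smul, hinv, one_smul]
    rw [hx_u, hhy, hhu, real_inner_smul_right] at h1
    have h2 : (lam / γ) * ⟪vs, y - B xs⟫ ≤ (lam / γ) * (f₁ y - f₁ (B xs)) := by
      linarith [h1]
    exact le_of_mul_le_mul_left (by linarith [h2]) (div_pos hlam hγ)
  -- Step 5 : conclusion
  intro x
  have hgi := aux_grad_ineq f₂ hf₂conv hf₂ xs x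
  rw [← hg, hgrad] at hgi
  have hinner : ⟪-(Bt vs), x - xs⟫ = -⟪vs, B x - B xs⟫ := by
    rw [inner_neg_left, hBt, ContinuousLinearMap.adjoint_inner_left, map_sub]
  rw [hinner] at hgi
  have h1 := hsubf₁ (B x)
  linarith [hgi, h1]
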